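/- For every n ≥ 1 and every nonzero multi-index μ ∈ ℕ^n, the supremum of |w^μ| over the closed unit ball of ℂ^n equals s_μ := ∏_{j=1}^n (μ_j/|μ|)^{μ_j/2}, with the convention 0^0 = 1. Consequently, sup_{|w|≤ε} |s_μ^{−1} w^μ| = ε^{|μ|} for every ε > 0. -/

import Mathlib

open Finset

/-- `s_μ = ∏_j (μ_j/|μ|)^{μ_j/2}` (real powers, with the convention `0^0 = 1`). -/
noncomputable def sCoeff {n : ℕ} (μ : Fin n → ℕ) : ℝ :=
  ∏ j, ((μ j : ℝ) / ((∑ i, μ i : ℕ) : ℝ)) ^ ((μ j : ℝ) / 2)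

section Aux

variable {n : ℕ}

private lemma sCoeff_pos (μ : Fin n → ℕ) (hμ : μ ≠ 0) : 0 < sCoeff μ := by
  have hM : 0 < ∑ i, μ i := by
    rcases Function.ne_iff.mp hμ with ⟨j, hj⟩
    exact Finset.sum_pos' (fun i _ => Nat.zero_le _) ⟨j, Finset.mem_univ j, Nat.pos_of_ne_zero hj⟩
  have hMR : (0:ℝ) < ((∑ i, μ i : ℕ) : ℝ) := by exact_mod_cast hM
  apply Finset.prod_pos
  intro j _
  rcases Nat.eq_zero_or_pos (μ j) with h | h
  · simp [h]
  · exact Real.rpow_pos_of_pos (by positivity) _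

/-- key squared inequality -/
private lemma key_ineq (μ : Fin n → ℕ) (hM : 0 < ∑ i, μ i) (a : Fin n → ℝ)
    (ha : ∀ j, 0 ≤ a j) (hsum : ∑ j, a j ≤ 1) :
    ∏ j, a j ^ μ j ≤ ∏ j, ((μ j : ℝ) / ((∑ i, μ i : ℕ) : ℝ)) ^ μ j := by
  set M : ℝ := ((∑ i, μ i : ℕ) : ℝ) with hMdef
  have hMpos : 0 < M := by rw [hMdef]; exact_mod_cast hM
  set t : Fin n → ℝ := fun j => (μ j : ℝ) / M with htdef
  set z : Fin n → ℝ := fun j => if μ j = 0 then 0 else a j * M / μ j with hzdef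
  have hz : ∀ j, 0 ≤ z j := by
    intro j; simp only [hzdef]
    by_cases h : μ j = 0
    · simp [h]
    · rw [if_neg h]; exact div_nonneg (mul_nonneg (ha j) hMpos.le) (Nat.cast_nonneg _)
  have ht : ∀ j ∈ Finset.univ, 0 ≤ t j := fun j _ => by positivity
  have htsum : ∑ j, t j = 1 := by
    simp only [htdef]
    rw [← Finset.sum_div]
    rw [show ∑ j, (μ j : ℝ) = M by simp [hMdef]]
    field_simp
  have hAM := Real.geom_mean_le_arith_mean_weighted Finset.univ t z ht htsum
    (fun j _ => hz j)
  have hsum2 : ∑ j, t j * z j ≤ 1 := by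
    refine le_trans (Finset.sum_le_sum (fun j _ => ?_)) hsum
    simp only [htdef, hzdef]
    by_cases h : μ j = 0
    · rw [if_pos h]; simpa using ha j
    · have hμj : (0:ℝ) < μ j := by exact_mod_cast Nat.pos_of_ne_zero h
      rw [if_neg h, show (μ j : ℝ) / M * (a j * M / μ j) = a j by field_simp]
  have hP : ∏ j, z j ^ t j ≤ 1 := le_trans hAM hsum2
  have hPnonneg : 0 ≤ ∏ j, z j ^ t j :=
    Finset.prod_nonneg fun j _ => Real.rpow_nonneg (hz j) _
  have hPM : (∏ j, z j ^ t j) ^ (∑ i, μ i) ≤ 1 :=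
    pow_le_one₀ hPnonneg hP
  have hprodz : (∏ j, z j ^ t j) ^ (∑ i, μ i) = ∏ j, z j ^ μ j := by
    rw [← Finset.prod_pow]
    refine Finset.prod_congr rfl fun j _ => ?_
    rw [← Real.rpow_natCast (z j ^ t j) (∑ i, μ i), ← Real.rpow_mul (hz j),
      show t j * ((∑ i, μ i : ℕ) : ℝ) = (μ j : ℝ) by
        simp only [htdef]; rw [← hMdef]; exact div_mul_cancel₀ _ hMpos.ne',
      Real.rpow_natCast]
  have hzμ : ∏ j, z j ^ μ j ≤ 1 := by rw [← hprodz]; exact hPM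
  have hfac : ∀ j, a j ^ μ j = z j ^ μ j * ((μ j : ℝ) / M) ^ μ j := by
    intro j
    simp only [hzdef]
    by_cases h : μ j = 0
    · simp [h]
    · rw [if_neg h]
      have hμj : (0:ℝ) < μ j := by exact_mod_cast Nat.pos_of_ne_zero h
      rw [← mul_pow, show a j * M / μ j * ((μ j : ℝ) / M) = a j by field_simp]
  calc ∏ j, a j ^ μ j = (∏ j, z j ^ μ j) * ∏ j, ((μ j : ℝ) / M) ^ μ j := by
        rw [← Finset.prod_mul_distrib]; exact Finset.prod_congr rfl fun j _ => hfac j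
    _ ≤ 1 * ∏ j, ((μ j : ℝ) / M) ^ μ j := by
        apply mul_le_mul_of_nonneg_right hzμ
        exact Finset.prod_nonneg fun j _ => pow_nonneg (by positivity) _
    _ = _ := one_mul _

end Aux

/-- For every `n ≥ 1` and every nonzero multi-index `μ ∈ ℕⁿ`, the supremum
of `|w^μ|` over the closed unit ball of `ℂⁿ` equals (and is attained at)
`s_μ = ∏_j (μ_j/|μ|)^{μ_j/2}`. Consequently, for every `ε > 0`,
`sup_{|w| ≤ ε} |s_μ⁻¹ w^μ| = ε^{|μ|}`. -/
theorem sup_monomial_closed_ball (n : ℕ) (hn : 1 ≤ n) (μ : Fin n → ℕ) (hμ : μ ≠ 0) :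
    IsGreatest
      {x : ℝ | ∃ w : EuclideanSpace ℂ (Fin n), ‖w‖ ≤ 1 ∧ x = ‖∏ j, w j ^ μ j‖}
      (sCoeff μ) ∧
    ∀ ε : ℝ, 0 < ε →
      IsGreatest
        {x : ℝ | ∃ w : EuclideanSpace ℂ (Fin n), ‖w‖ ≤ ε ∧
          x = ‖((sCoeff μ : ℝ) : ℂ)⁻¹ * ∏ j, w j ^ μ j‖}
        (ε ^ (∑ i, μ i)) := by
  have hM : 0 < ∑ i, μ i := by
    rcases Function.ne_iff.mp hμ with ⟨j, hj⟩
    exact Finset.sum_pos' (fun i _ => Nat.zero_le _) ⟨j, Finset.mem_univ j, Nat.pos_of_ne_zero hj⟩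
  have hMR : (0:ℝ) < ((∑ i, μ i : ℕ) : ℝ) := by exact_mod_cast hM
  have hs : 0 < sCoeff μ := sCoeff_pos μ hμ
  -- squared value of sCoeff
  have hssq : (sCoeff μ) ^ 2 = ∏ j, ((μ j : ℝ) / ((∑ i, μ i : ℕ) : ℝ)) ^ μ j := by
    rw [sCoeff, ← Finset.prod_pow]
    refine Finset.prod_congr rfl fun j _ => ?_
    rw [← Real.rpow_natCast (_ ^ _) 2, ← Real.rpow_mul (by positivity)]
    rw [show (μ j : ℝ) / 2 * ((2:ℕ):ℝ) = (μ j : ℝ) by push_cast; ring, Real.rpow_natCast]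
  -- upper bound on the unit ball
  have hub : ∀ w : EuclideanSpace ℂ (Fin n), ‖w‖ ≤ 1 → ‖∏ j, w j ^ μ j‖ ≤ sCoeff μ := by
    intro w hw
    have hsum : ∑ j, ‖w j‖ ^ 2 ≤ 1 := by
      have hnn : 0 ≤ ∑ j, ‖w j‖ ^ 2 := Finset.sum_nonneg fun j _ => by positivity
      have h1 : Real.sqrt (∑ j, ‖w j‖ ^ 2) ≤ 1 := by rw [← EuclideanSpace.norm_eq]; exact hw
      calc ∑ j, ‖w j‖ ^ 2 = Real.sqrt (∑ j, ‖w j‖ ^ 2) ^ 2 := (Real.sq_sqrt hnn).symm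
        _ ≤ 1 := pow_le_one₀ (Real.sqrt_nonneg _) h1
    have key := key_ineq μ hM (fun j => ‖w j‖ ^ 2) (fun j => by positivity) hsum
    have hLHS : ∏ j, (‖w j‖ ^ 2) ^ μ j = ‖∏ j, w j ^ μ j‖ ^ 2 := by
      rw [norm_prod, ← Finset.prod_pow]
      refine Finset.prod_congr rfl fun j _ => ?_
      rw [norm_pow, ← pow_mul, ← pow_mul, mul_comm]
    rw [hLHS, ← hssq] at key
    have h1 := Real.sqrt_le_sqrt key
    rwa [Real.sqrt_sq (norm_nonneg _), Real.sqrt_sq hs.le] at h1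
  -- the maximizer
  have hmem : ∃ w : EuclideanSpace ℂ (Fin n), ‖w‖ ≤ 1 ∧ sCoeff μ = ‖∏ j, w j ^ μ j‖ := by
    refine ⟨WithLp.toLp 2 (fun j => ((((μ j : ℝ) / ((∑ i, μ i : ℕ) : ℝ)) ^ ((1:ℝ)/2) : ℝ) : ℂ)), ?_, ?_⟩
    · rw [EuclideanSpace.norm_eq]
      have : ∀ j, ‖((((μ j : ℝ) / ((∑ i, μ i : ℕ) : ℝ)) ^ ((1:ℝ)/2) : ℝ) : ℂ)‖ ^ 2
          = (μ j : ℝ) / ((∑ i, μ i : ℕ) : ℝ) := by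
        intro j
        rw [Complex.norm_real, Real.norm_eq_abs,
          abs_of_nonneg (Real.rpow_nonneg (by positivity) _),
          ← Real.rpow_natCast (_ ^ _) 2, ← Real.rpow_mul (by positivity)]
        norm_num
      rw [Finset.sum_congr rfl fun j _ => this j, ← Finset.sum_div,
        show ∑ j, (μ j : ℝ) = ((∑ i, μ i : ℕ) : ℝ) by push_cast; rfl,
        div_self hMR.ne', Real.sqrt_one]
    · simp only [PiLp.toLp_apply]
      rw [norm_prod, sCoeff]
      refine Finset.prod_congr rfl fun j _ => ?_
      rw [norm_pow, Complex.norm_real, Real.norm_eq_abs,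
        abs_of_nonneg (Real.rpow_nonneg (by positivity) _),
        ← Real.rpow_natCast (_ ^ ((1:ℝ)/2)) (μ j), ← Real.rpow_mul (by positivity)]
      rw [show (1:ℝ)/2 * (μ j : ℝ) = (μ j : ℝ) / 2 by ring]
  have hG1 : IsGreatest
      {x : ℝ | ∃ w : EuclideanSpace ℂ (Fin n), ‖w‖ ≤ 1 ∧ x = ‖∏ j, w j ^ μ j‖}
      (sCoeff μ) := by
    constructor
    · exact hmem
    · rintro x ⟨w, hw, rfl⟩; exact hub w hw
  refine ⟨hG1, ?_⟩
  intro ε hε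
  have hscale : ∀ (c : ℝ) (u : EuclideanSpace ℂ (Fin n)),
      ‖((sCoeff μ : ℝ) : ℂ)⁻¹ * ∏ j, (c • u) j ^ μ j‖
        = (sCoeff μ)⁻¹ * (|c| ^ (∑ i, μ i) * ‖∏ j, u j ^ μ j‖) := by
    intro c u
    have happ : ∀ j, (c • u) j = (c : ℂ) * u j := fun j => by
      simp [PiLp.smul_apply, Complex.real_smul]
    simp only [happ, mul_pow, Finset.prod_mul_distrib, Finset.prod_pow_eq_pow_sum]
    rw [norm_mul, norm_inv, norm_mul, norm_pow, Complex.norm_real, Complex.norm_real,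
      Real.norm_eq_abs, Real.norm_eq_abs, abs_of_pos hs]
  constructor
  · obtain ⟨w₀, hw₀, hval⟩ := hmem
    refine ⟨ε • w₀, ?_, ?_⟩
    · rw [norm_smul, Real.norm_eq_abs, abs_of_pos hε]
      calc ε * ‖w₀‖ ≤ ε * 1 := by
            exact mul_le_mul_of_nonneg_left hw₀ hε.le
        _ = ε := mul_one ε
    · rw [hscale ε w₀, ← hval, abs_of_pos hε]
      field_simp
  · rintro x ⟨w, hw, rfl⟩
    have hwv : w = ε • (ε⁻¹ • w) := (smul_inv_smul₀ hε.ne' w).symm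
    have hv : ‖(ε⁻¹ • w : EuclideanSpace ℂ (Fin n))‖ ≤ 1 := by
      rw [norm_smul, Real.norm_eq_abs, abs_of_pos (inv_pos.mpr hε)]
      calc ε⁻¹ * ‖w‖ ≤ ε⁻¹ * ε := mul_le_mul_of_nonneg_left hw (inv_pos.mpr hε).le
        _ = 1 := inv_mul_cancel₀ hε.ne'
    rw [hwv, hscale ε (ε⁻¹ • w), abs_of_pos hε]
    have hb := hub _ hv
    calc (sCoeff μ)⁻¹ * (ε ^ (∑ i, μ i) * ‖∏ j, (ε⁻¹ • w : EuclideanSpace ℂ (Fin n)) j ^ μ j‖)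
        ≤ (sCoeff μ)⁻¹ * (ε ^ (∑ i, μ i) * sCoeff μ) := by
          exact mul_le_mul_of_nonneg_left
            (mul_le_mul_of_nonneg_left hb (by positivity)) (inv_nonneg.mpr hs.le)
      _ = ε ^ (∑ i, μ i) := by field_simp
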